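/- Let f : ℝⁿ → ℝ be m-strongly convex and differentiable with L-Lipschitz gradient, with minimizer x*. Fix η₁, η₂, λ₂ > 0 and λ₁ ∈ (0,1). Define the scaled gradient flow vector field G(x) = -(η₁‖∇f(x)‖^{-λ₁} + η₂‖∇f(x)‖^{λ₂})∇f(x) for x ≠ x* and G(x*) = 0. Then for V(x) = ½‖x - x*‖² and all x ≠ x*: ⟨x - x*, G(x)⟩ ≤ -(η₁ m/L^{λ₁})‖x - x*‖^{2-λ₁} - η₂ m^{1+λ₂}‖x - x*‖^{2+λ₂}, i.e. V̇ ≤ -c₁ V^{1-λ₁/2} - c₂ V^{1+λ₂/2} with c₁ = η₁ m 2^{1-λ₁/2}/L^{λ₁} and c₂ = η₂ m^{1+λ₂} 2^{1+λ₂/2}. -/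

import Mathlib

open scoped RealInnerProductSpace

theorem strongly_convex_scaled_gradient_flow_fixed {n : ℕ}
    (f : EuclideanSpace ℝ (Fin n) → ℝ)
    (gradf : EuclideanSpace ℝ (Fin n) → EuclideanSpace ℝ (Fin n))
    (m L η₁ η₂ lam₁ lam₂ : ℝ) (hm : 0 < m) (hL : 0 < L)
    (hη₁ : 0 < η₁) (hη₂ : 0 < η₂) (hlam₂ : 0 < lam₂) (hlam₁0 : 0 < lam₁) (hlam₁1 : lam₁ < 1)
    (hgrad : ∀ x, HasGradientAt f (gradf x) x)
    (hstrong : ∀ x y, f x + ⟪gradf x, y - x⟫ + m / 2 * ‖y - x‖ ^ 2 ≤ f y)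
    (hgradLip : LipschitzWith L.toNNReal gradf)
    (xstar : EuclideanSpace ℝ (Fin n)) (hmin : ∀ y, f xstar ≤ f y)
    (G : EuclideanSpace ℝ (Fin n) → EuclideanSpace ℝ (Fin n))
    (hGstar : G xstar = 0)
    (hG : ∀ x, x ≠ xstar →
      G x = -((η₁ * ‖gradf x‖ ^ (-lam₁) + η₂ * ‖gradf x‖ ^ lam₂) • gradf x)) :
    ∀ x, x ≠ xstar →
      ⟪x - xstar, G x⟫ ≤
          -(η₁ * m / L ^ lam₁) * ‖x - xstar‖ ^ (2 - lam₁)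
          - η₂ * m ^ (1 + lam₂) * ‖x - xstar‖ ^ (2 + lam₂) ∧
      ⟪x - xstar, G x⟫ ≤
          -(η₁ * m * 2 ^ (1 - lam₁ / 2) / L ^ lam₁) * ((1 : ℝ) / 2 * ‖x - xstar‖ ^ 2) ^ (1 - lam₁ / 2)
          - (η₂ * m ^ (1 + lam₂) * 2 ^ (1 + lam₂ / 2)) * ((1 : ℝ) / 2 * ‖x - xstar‖ ^ 2) ^ (1 + lam₂ / 2) := by
  -- gradient at the minimizer is zero
  have hgstar : gradf xstar = 0 := by
    have hloc : IsLocalMin f xstar := (isMinOn_univ_iff.mpr hmin).isLocalMin (by simp)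
    have h0 := hloc.hasFDerivAt_eq_zero (hgrad xstar).hasFDerivAt
    have := (InnerProductSpace.toDual ℝ (EuclideanSpace ℝ (Fin n))).map_zero
    exact (InnerProductSpace.toDual ℝ _).injective (by rw [h0, this])
  intro x hx
  set r : ℝ := ‖x - xstar‖ with hrdef
  have hr : 0 < r := by
    simpa [hrdef, sub_eq_zero] using hx
  set g : EuclideanSpace ℝ (Fin n) := gradf x with hgdef
  -- ⟪g, x - xstar⟫ ≥ m r²
  have hip : m * r ^ 2 ≤ ⟪g, x - xstar⟫ := by
    have h1 := hstrong x xstar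
    have h2 := hstrong xstar x
    rw [hgstar] at h2
    simp only [inner_zero_left] at h2
    rw [← hgdef] at h1
    have hsymm : ‖xstar - x‖ = r := by rw [hrdef, norm_sub_rev]
    have hinner : ⟪g, xstar - x⟫ = -⟪g, x - xstar⟫ := by
      rw [← inner_neg_right]; congr 1; abel
    rw [hsymm, hinner] at h1
    nlinarith [h1, h2]
  -- ‖g‖ ≥ m r
  have hglb : m * r ≤ ‖g‖ := by
    have hcs : ⟪g, x - xstar⟫ ≤ ‖g‖ * r := by
      simpa [hrdef] using real_inner_le_norm g (x - xstar)
    have : m * r ^ 2 ≤ ‖g‖ * r := le_trans hip hcs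
    have := (mul_le_mul_iff_of_pos_right hr).mpr (le_refl (1:ℝ))
    nlinarith
  -- ‖g‖ ≤ L r
  have hgub : ‖g‖ ≤ L * r := by
    have := hgradLip.dist_le_mul x xstar
    rw [dist_eq_norm, dist_eq_norm, hgstar, sub_zero] at this
    calc ‖g‖ ≤ L.toNNReal * r := this
      _ = L * r := by rw [Real.coe_toNNReal _ hL.le]
  have hgpos : 0 < ‖g‖ := lt_of_lt_of_le (by positivity) hglb
  have hippos : 0 < ⟪g, x - xstar⟫ := lt_of_lt_of_le (by positivity) hip
  -- rewrite the inner product with G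
  have hGx : ⟪x - xstar, G x⟫ =
      -((η₁ * ‖g‖ ^ (-lam₁) + η₂ * ‖g‖ ^ lam₂) * ⟪g, x - xstar⟫) := by
    rw [hG x hx, inner_neg_right, real_inner_smul_right, real_inner_comm]
  -- bound term 1: η₁ m / L^lam₁ * r^(2-lam₁) ≤ η₁ ‖g‖^(-lam₁) * ⟪g, x-x*⟫
  have hterm1 : η₁ * m / L ^ lam₁ * r ^ (2 - lam₁)
      ≤ η₁ * ‖g‖ ^ (-lam₁) * ⟪g, x - xstar⟫ := by
    have hmono : (L * r) ^ (-lam₁) ≤ ‖g‖ ^ (-lam₁) :=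
      Real.rpow_le_rpow_of_nonpos hgpos hgub (neg_nonpos.mpr hlam₁0.le)
    have hsplit : (L * r) ^ (-lam₁) = L ^ (-lam₁) * r ^ (-lam₁) :=
      Real.mul_rpow hL.le hr.le
    have hrpow : r ^ (-lam₁) * r ^ (2:ℝ) = r ^ (2 - lam₁) := by
      rw [← Real.rpow_add hr]; ring_nf
    have hr2 : (r:ℝ) ^ (2:ℕ) = r ^ (2:ℝ) := by
      rw [← Real.rpow_natCast r 2]; norm_num
    have hstep : η₁ * ‖g‖ ^ (-lam₁) * (m * r ^ 2) ≤ η₁ * ‖g‖ ^ (-lam₁) * ⟪g, x - xstar⟫ := by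
      apply mul_le_mul_of_nonneg_left hip (by positivity)
    refine le_trans ?_ hstep
    have hL1 : L ^ (-lam₁) = (L ^ lam₁)⁻¹ := by
      rw [Real.rpow_neg hL.le]
    calc η₁ * m / L ^ lam₁ * r ^ (2 - lam₁)
        = η₁ * (L ^ (-lam₁) * r ^ (-lam₁)) * (m * r ^ 2) := by
          rw [hL1, hr2]
          rw [show η₁ * (((L ^ lam₁)⁻¹) * r ^ (-lam₁)) * (m * r ^ (2:ℝ))
              = η₁ * m / L ^ lam₁ * (r ^ (-lam₁) * r ^ (2:ℝ)) by ring, hrpow]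
      _ ≤ η₁ * ‖g‖ ^ (-lam₁) * (m * r ^ 2) := by
          apply mul_le_mul_of_nonneg_right _ (by positivity)
          rw [← hsplit]
          exact mul_le_mul_of_nonneg_left hmono hη₁.le
  -- bound term 2
  have hterm2 : η₂ * m ^ (1 + lam₂) * r ^ (2 + lam₂)
      ≤ η₂ * ‖g‖ ^ lam₂ * ⟪g, x - xstar⟫ := by
    have hmono : (m * r) ^ lam₂ ≤ ‖g‖ ^ lam₂ :=
      Real.rpow_le_rpow (by positivity) hglb hlam₂.le
    have hsplit : (m * r) ^ lam₂ = m ^ lam₂ * r ^ lam₂ :=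
      Real.mul_rpow hm.le hr.le
    have hr2 : (r:ℝ) ^ (2:ℕ) = r ^ (2:ℝ) := by
      rw [← Real.rpow_natCast r 2]; norm_num
    have hrpow : r ^ lam₂ * r ^ (2:ℝ) = r ^ (2 + lam₂) := by
      rw [← Real.rpow_add hr]; ring_nf
    have hmpow : m ^ (1 + lam₂) = m * m ^ lam₂ := by
      rw [Real.rpow_add hm, Real.rpow_one]
    have hstep : η₂ * ‖g‖ ^ lam₂ * (m * r ^ 2) ≤ η₂ * ‖g‖ ^ lam₂ * ⟪g, x - xstar⟫ :=
      mul_le_mul_of_nonneg_left hip (by positivity)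
    refine le_trans ?_ hstep
    calc η₂ * m ^ (1 + lam₂) * r ^ (2 + lam₂)
        = η₂ * (m ^ lam₂ * r ^ lam₂) * (m * r ^ 2) := by
          rw [hmpow, hr2, ← hrpow]; ring
      _ ≤ η₂ * ‖g‖ ^ lam₂ * (m * r ^ 2) := by
          apply mul_le_mul_of_nonneg_right _ (by positivity)
          rw [← hsplit]
          exact mul_le_mul_of_nonneg_left hmono hη₂.le
  have hfirst : ⟪x - xstar, G x⟫ ≤
      -(η₁ * m / L ^ lam₁) * r ^ (2 - lam₁) - η₂ * m ^ (1 + lam₂) * r ^ (2 + lam₂) := by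
    rw [hGx]
    have := add_le_add hterm1 hterm2
    nlinarith [this]
  refine ⟨hfirst, ?_⟩
  -- second form equals the first RHS
  have hr2 : (r:ℝ) ^ (2:ℕ) = r ^ (2:ℝ) := by
    rw [← Real.rpow_natCast r 2]; norm_num
  have key : ∀ a : ℝ, ((1:ℝ)/2 * r ^ 2) ^ a = (1/2:ℝ) ^ a * r ^ (2 * a) := by
    intro a
    rw [Real.mul_rpow (by norm_num) (by positivity), hr2, ← Real.rpow_mul hr.le]
  have hhalf : ∀ a : ℝ, (2:ℝ) ^ a * (1/2:ℝ) ^ a = 1 := by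
    intro a
    rw [← Real.mul_rpow (by norm_num) (by norm_num)]
    norm_num
  have e1 : -(η₁ * m * 2 ^ (1 - lam₁ / 2) / L ^ lam₁) * ((1:ℝ)/2 * r ^ 2) ^ (1 - lam₁ / 2)
      = -(η₁ * m / L ^ lam₁) * r ^ (2 - lam₁) := by
    rw [key (1 - lam₁ / 2)]
    have h2a : 2 * (1 - lam₁ / 2) = 2 - lam₁ := by ring
    rw [h2a]
    have h := hhalf (1 - lam₁ / 2)
    rw [show -(η₁ * m * 2 ^ (1 - lam₁ / 2) / L ^ lam₁) * ((1/2:ℝ) ^ (1 - lam₁ / 2) * r ^ (2 - lam₁))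
        = -(η₁ * m / L ^ lam₁) * r ^ (2 - lam₁) * ((2:ℝ) ^ (1 - lam₁ / 2) * (1/2:ℝ) ^ (1 - lam₁ / 2)) by ring,
      h, mul_one]
  have e2 : (η₂ * m ^ (1 + lam₂) * 2 ^ (1 + lam₂ / 2)) * ((1:ℝ)/2 * r ^ 2) ^ (1 + lam₂ / 2)
      = η₂ * m ^ (1 + lam₂) * r ^ (2 + lam₂) := by
    rw [key (1 + lam₂ / 2)]
    have h2a : 2 * (1 + lam₂ / 2) = 2 + lam₂ := by ring
    rw [h2a]
    have h := hhalf (1 + lam₂ / 2)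
    rw [show (η₂ * m ^ (1 + lam₂) * 2 ^ (1 + lam₂ / 2)) * ((1/2:ℝ) ^ (1 + lam₂ / 2) * r ^ (2 + lam₂))
        = η₂ * m ^ (1 + lam₂) * r ^ (2 + lam₂) * ((2:ℝ) ^ (1 + lam₂ / 2) * (1/2:ℝ) ^ (1 + lam₂ / 2)) by ring,
      h, mul_one]
  rw [e1, e2]
  exact hfirst
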